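/- Let B : [0,1] → ℝ be continuous with B(0) = 0, and let u and v be B-solutions. Then the Wronskian x ↦ u'(x)·v(x) − u(x)·v'(x) is a constant function on [0,1]. -/
import Mathlib


open MeasureTheory intervalIntegral

/-- `u` is a pathwise (`B`-)solution of the homogeneous equation `-u'' + B'·u = 0`:
`u` is continuously differentiable on `[0,1]` with derivative `u'`, and
`u'(x) = u'(0) + u(x)·B(x) - ∫_0^x u'(y)·B(y) dy` for all `x ∈ [0,1]`. -/
def IsBSolution (B u u' : ℝ → ℝ) : Prop :=
  (∀ x ∈ Set.Icc (0:ℝ) 1, HasDerivWithinAt u (u' x) (Set.Icc 0 1) x) ∧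
  ContinuousOn u' (Set.Icc 0 1) ∧
  ∀ x ∈ Set.Icc (0:ℝ) 1, u' x = u' 0 + u x * B x - ∫ y in (0:ℝ)..x, u' y * B y

/-- The Wronskian of two B-solutions is constant on [0,1]. -/
theorem wronskian_constant (B u u' v v' : ℝ → ℝ)
    (hB : ContinuousOn B (Set.Icc 0 1)) (hB0 : B 0 = 0)
    (hu : IsBSolution B u u') (hv : IsBSolution B v v') :
    ∀ x ∈ Set.Icc (0:ℝ) 1,
      u' x * v x - u x * v' x = u' 0 * v 0 - u 0 * v' 0 := by
  obtain ⟨hud, huc, hueq⟩ := hu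
  obtain ⟨hvd, hvc, hveq⟩ := hv
  -- continuous extensions of u'·B and v'·B to all of ℝ
  set fu : ℝ → ℝ := Set.IccExtend zero_le_one ((Set.Icc (0:ℝ) 1).restrict fun y => u' y * B y)
    with hfu
  set gv : ℝ → ℝ := Set.IccExtend zero_le_one ((Set.Icc (0:ℝ) 1).restrict fun y => v' y * B y)
    with hgv
  have hfuc : Continuous fu :=
    Continuous.Icc_extend' (continuousOn_iff_continuous_restrict.1 (huc.mul hB))
  have hgvc : Continuous gv :=
    Continuous.Icc_extend' (continuousOn_iff_continuous_restrict.1 (hvc.mul hB))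
  have hfu_eq : ∀ x ∈ Set.Icc (0:ℝ) 1, fu x = u' x * B x := fun x hx => by
    rw [hfu, Set.IccExtend_of_mem _ _ hx]; rfl
  have hgv_eq : ∀ x ∈ Set.Icc (0:ℝ) 1, gv x = v' x * B x := fun x hx => by
    rw [hgv, Set.IccExtend_of_mem _ _ hx]; rfl
  set F : ℝ → ℝ := fun x => ∫ y in (0:ℝ)..x, fu y with hF
  set G : ℝ → ℝ := fun x => ∫ y in (0:ℝ)..x, gv y with hG
  have hFd : ∀ x : ℝ, HasDerivAt F (fu x) x := fun x =>
    (hfuc.integral_hasStrictDerivAt 0 x).hasDerivAt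
  have hGd : ∀ x : ℝ, HasDerivAt G (gv x) x := fun x =>
    (hgvc.integral_hasStrictDerivAt 0 x).hasDerivAt
  -- F and G agree with the integrals in the equations on [0,1]
  have hFval : ∀ x ∈ Set.Icc (0:ℝ) 1, F x = u' 0 + u x * B x - u' x := by
    intro x hx
    have h1 : F x = ∫ y in (0:ℝ)..x, u' y * B y := by
      refine intervalIntegral.integral_congr fun y hy => ?_
      refine hfu_eq y ?_
      have : Set.uIcc (0:ℝ) x ⊆ Set.Icc 0 1 := by
        rw [Set.uIcc_of_le hx.1]
        exact Set.Icc_subset_Icc le_rfl hx.2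
      exact this hy
    rw [h1]
    have := hueq x hx
    linarith
  have hGval : ∀ x ∈ Set.Icc (0:ℝ) 1, G x = v' 0 + v x * B x - v' x := by
    intro x hx
    have h1 : G x = ∫ y in (0:ℝ)..x, v' y * B y := by
      refine intervalIntegral.integral_congr fun y hy => ?_
      refine hgv_eq y ?_
      have : Set.uIcc (0:ℝ) x ⊆ Set.Icc 0 1 := by
        rw [Set.uIcc_of_le hx.1]
        exact Set.Icc_subset_Icc le_rfl hx.2
      exact this hy
    rw [h1]
    have := hveq x hx
    linarith
  set W : ℝ → ℝ := fun x => u' 0 * v x - v' 0 * u x - v x * F x + u x * G x with hW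
  have hWcont : ContinuousOn W (Set.Icc (0:ℝ) 1) := by
    have hucont : ContinuousOn u (Set.Icc (0:ℝ) 1) := fun x hx =>
      (hud x hx).continuousWithinAt
    have hvcont : ContinuousOn v (Set.Icc (0:ℝ) 1) := fun x hx =>
      (hvd x hx).continuousWithinAt
    have hFcont : ContinuousOn F (Set.Icc (0:ℝ) 1) :=
      fun x _ => ((hFd x).continuousAt).continuousWithinAt
    have hGcont : ContinuousOn G (Set.Icc (0:ℝ) 1) :=
      fun x _ => ((hGd x).continuousAt).continuousWithinAt
    exact (((continuousOn_const.mul hvcont).sub (continuousOn_const.mul hucont)).sub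
      (hvcont.mul hFcont)).add (hucont.mul hGcont)
  have hWderiv : ∀ x ∈ Set.Ico (0:ℝ) 1, HasDerivWithinAt W 0 (Set.Ici x) x := by
    intro x hx
    have hxI : x ∈ Set.Icc (0:ℝ) 1 := ⟨hx.1, le_of_lt hx.2⟩
    have hmem : Set.Icc (0:ℝ) 1 ∈ nhdsWithin x (Set.Ici x) := Icc_mem_nhdsGE_of_mem hx
    have hu' : HasDerivWithinAt u (u' x) (Set.Ici x) x := (hud x hxI).mono_of_mem_nhdsWithin hmem
    have hv' : HasDerivWithinAt v (v' x) (Set.Ici x) x := (hvd x hxI).mono_of_mem_nhdsWithin hmem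
    have hF' : HasDerivWithinAt F (fu x) (Set.Ici x) x := (hFd x).hasDerivWithinAt
    have hG' : HasDerivWithinAt G (gv x) (Set.Ici x) x := (hGd x).hasDerivWithinAt
    have hsum : HasDerivWithinAt W
        (u' 0 * v' x - v' 0 * u' x - (v' x * F x + v x * fu x)
          + (u' x * G x + u x * gv x)) (Set.Ici x) x := by
      exact (((hv'.const_mul (u' 0)).sub (hu'.const_mul (v' 0))).sub
        (hv'.mul hF')).add (hu'.mul hG')
    have hzero : u' 0 * v' x - v' 0 * u' x - (v' x * F x + v x * fu x)
        + (u' x * G x + u x * gv x) = 0 := by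
      rw [hfu_eq x hxI, hgv_eq x hxI, hFval x hxI, hGval x hxI]
      ring
    rwa [hzero] at hsum
  have hWconst := constant_of_has_deriv_right_zero hWcont hWderiv
  intro x hx
  have hx0 : (0:ℝ) ∈ Set.Icc (0:ℝ) 1 := ⟨le_rfl, zero_le_one⟩
  have hWx := hWconst x hx
  have hF0 : F 0 = 0 := intervalIntegral.integral_same
  have hG0 : G 0 = 0 := intervalIntegral.integral_same
  have hFx := hFval x hx
  have hGx := hGval x hx
  have hW0 : W 0 = u' 0 * v 0 - u 0 * v' 0 := by
    simp only [hW, hF0, hG0]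
    ring
  have hWxval : W x = u' x * v x - u x * v' x := by
    simp only [hW]
    rw [hFx, hGx]
    ring
  rw [← hWxval, hWx, hW0]
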